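/- Let r ≥ 2 and s ≥ 1 be coprime integers, let θ = exp(2πi/r), let z be a nonzero complex number, let S_1, …, S_r be complex numbers, and let i ∈ {1, …, r}. Then Σ_{m=0}^{r−1} ( Σ_{k=1}^{r} (−1)^{k−1} S_k · θ^{−m·s·(k−1)} · z^{−s(k−1)−1} ) · e_{i−1}( { r·θ^{m'·s}·z^{s−1} : 0 ≤ m' ≤ r−1, m' ≠ m } ) = S_i · r^i · z^{−i}, where e_{i−1} denotes the (i−1)-st elementary symmetric polynomial of the indicated multiset of r−1 complex numbers (with e_0 = 1). -/

import Mathlib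

open Finset

/-- The `j`-th elementary symmetric polynomial of the family `f` restricted to the
finite index set `s` of sheets: the sum over all `j`-element subsets of `s` of the
products of the corresponding values (so `e_0 = 1`). -/
noncomputable def esymFin {n : ℕ} (s : Finset (Fin n)) (f : Fin n → ℂ) (j : ℕ) : ℂ :=
  ∑ t ∈ s.powersetCard j, ∏ a ∈ t, f a

/-- The identity `E^i_{1/2,0}(x) = S_{i,1} (dx/x)^i` on the shifted `(r,s)`-spectral curve,
in explicit form: with `θ = exp(2πi/r)`,
`Σ_{m=0}^{r−1} (Σ_{k=1}^r (−1)^{k−1} S_k θ^{−m s (k−1)} z^{−s(k−1)−1})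
  · e_{i−1}({ r θ^{m' s} z^{s−1} : m' ≠ m }) = S_i r^i z^{−i}`
(indices of `S` are `0`-based in Lean, so `S k` is `S_{k+1}`). -/
lemma esymFin_zero {n : ℕ} (s : Finset (Fin n)) (f : Fin n → ℂ) :
    esymFin s f 0 = 1 := by
  simp [esymFin]

lemma esymFin_const_mul {n : ℕ} (s : Finset (Fin n)) (f : Fin n → ℂ) (c : ℂ) (j : ℕ) :
    esymFin s (fun a => c * f a) j = c ^ j * esymFin s f j := by
  unfold esymFin
  rw [mul_sum]
  refine sum_congr rfl fun t ht => ?_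
  rw [prod_mul_distrib, prod_const, (mem_powersetCard.mp ht).2]

lemma esymFin_insert {n : ℕ} {s : Finset (Fin n)} {a : Fin n} (ha : a ∉ s)
    (f : Fin n → ℂ) (j : ℕ) :
    esymFin (insert a s) f (j + 1) = esymFin s f (j + 1) + f a * esymFin s f j := by
  unfold esymFin
  rw [powersetCard_succ_insert ha, sum_union, mul_sum]
  · congr 1
    rw [sum_image]
    · refine sum_congr rfl fun t ht => ?_
      have hat : a ∉ t := fun h => ha ((mem_powersetCard.mp ht).1 h)
      rw [prod_insert hat]
    · intro t1 h1 t2 h2 he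
      have h1' : a ∉ t1 := fun h => ha ((mem_powersetCard.mp h1).1 h)
      have h2' : a ∉ t2 := fun h => ha ((mem_powersetCard.mp h2).1 h)
      rw [← erase_insert h1', ← erase_insert h2', he]
  · rw [disjoint_left]
    intro t ht ht'
    obtain ⟨u, hu, rfl⟩ := mem_image.mp ht'
    exact ha ((mem_powersetCard.mp ht).1 (mem_insert_self a u))

lemma esymFin_univ_root {r : ℕ} {w : ℂ} (hw : IsPrimitiveRoot w r) {j : ℕ}
    (hj1 : 1 ≤ j) (hjr : j < r) :
    esymFin (univ : Finset (Fin r)) (fun a => w ^ (a : ℕ)) j = 0 := by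
  have hr0 : 0 < r := lt_of_le_of_lt (Nat.zero_le j) hjr
  haveI : NeZero r := ⟨hr0.ne'⟩
  have hw1 : w ^ r = 1 := hw.pow_eq_one
  have hmod : ∀ n : ℕ, w ^ (n % r) = w ^ n := by
    intro n
    conv_rhs => rw [← Nat.div_add_mod n r]
    rw [pow_add, pow_mul, hw1, one_pow, one_mul]
  set e := esymFin (univ : Finset (Fin r)) (fun a => w ^ (a : ℕ)) j with he
  have key : w ^ j * e = e := by
    rw [he]
    unfold esymFin
    rw [mul_sum]
    refine sum_nbij' (fun t => t.map (addRightEmbedding (1 : Fin r)))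
      (fun t => t.map (addRightEmbedding (-1 : Fin r))) ?_ ?_ ?_ ?_ ?_
    · intro t ht
      rw [mem_powersetCard] at ht ⊢
      exact ⟨subset_univ _, by rw [card_map]; exact ht.2⟩
    · intro t ht
      rw [mem_powersetCard] at ht ⊢
      exact ⟨subset_univ _, by rw [card_map]; exact ht.2⟩
    · intro t ht
      simp only [map_map]
      convert map_refl using 2
      ext x
      simp [addRightEmbedding, Function.Embedding.trans]
    · intro t ht
      simp only [map_map]
      convert map_refl using 2
      ext x
      simp [addRightEmbedding, Function.Embedding.trans]
    · intro t ht
      simp only []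
      rw [prod_map]
      have hcard : t.card = j := (mem_powersetCard.mp ht).2
      have hstep : ∀ a : Fin r, w ^ (((addRightEmbedding (1 : Fin r)) a : Fin r) : ℕ)
          = w * w ^ (a : ℕ) := by
        intro a
        have h1 : ((a + 1 : Fin r) : ℕ) = ((a : ℕ) + 1) % r := by
          simp [Fin.add_def]
        simp only [addRightEmbedding_apply]
        rw [h1, hmod, pow_succ, mul_comm]
      simp only [hstep]
      rw [prod_mul_distrib, prod_const, hcard]
  have hne : w ^ j ≠ 1 := hw.pow_ne_one_of_pos_of_lt (by omega) hjr
  have h0 : (w ^ j - 1) * e = 0 := by linear_combination key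
  rcases mul_eq_zero.mp h0 with h | h
  · exact absurd (by linear_combination h) hne
  · exact h

lemma esymFin_sdiff {r : ℕ} {w : ℂ} (hw : IsPrimitiveRoot w r) (m : Fin r) :
    ∀ j : ℕ, j + 1 ≤ r →
      esymFin (univ \ {m}) (fun a => w ^ (a : ℕ)) j = (-(w ^ (m : ℕ))) ^ j := by
  intro j
  induction j with
  | zero => intro _; rw [esymFin_zero, pow_zero]
  | succ j ih =>
    intro hj
    have hins : insert m ((univ : Finset (Fin r)) \ {m}) = univ := by
      rw [sdiff_singleton_eq_erase, insert_erase (mem_univ m)]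
    have hnot : m ∉ (univ : Finset (Fin r)) \ {m} := by simp
    have hrec := esymFin_insert hnot (fun a => w ^ (a : ℕ)) j
    rw [hins] at hrec
    have hvan : esymFin (univ : Finset (Fin r)) (fun a => w ^ (a : ℕ)) (j + 1) = 0 :=
      esymFin_univ_root hw (Nat.le_add_left 1 j) (by omega)
    rw [hvan] at hrec
    have ihj := ih (by omega)
    rw [ihj] at hrec
    have : esymFin (univ \ {m}) (fun a => w ^ (a : ℕ)) (j + 1)
        = -(w ^ (m : ℕ)) * (-(w ^ (m : ℕ))) ^ j := by linear_combination -hrec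
    rw [this, ← pow_succ']

theorem stmt15 (r s : ℕ) (hr : 2 ≤ r) (hs : 1 ≤ s) (hcop : Nat.Coprime r s)
    (z : ℂ) (hz : z ≠ 0) (S : Fin r → ℂ)
    (i : ℕ) (hi1 : 1 ≤ i) (hir : i ≤ r) :
    ∑ m : Fin r,
        (∑ k : Fin r, (-1 : ℂ) ^ (k : ℕ) * S k *
            Complex.exp (2 * Real.pi * Complex.I / r) ^
              (-((((m : ℕ) * s * (k : ℕ)) : ℕ) : ℤ)) *
            z ^ (-(s : ℤ) * ((k : ℕ) : ℤ) - 1)) *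
          esymFin (Finset.univ \ {m})
            (fun m' : Fin r =>
              (r : ℂ) * Complex.exp (2 * Real.pi * Complex.I / r) ^ ((m' : ℕ) * s) *
                z ^ (s - 1))
            (i - 1)
      = S ⟨i - 1, by omega⟩ * (r : ℂ) ^ i * z ^ (-(i : ℤ)) := by
  set θ := Complex.exp (2 * Real.pi * Complex.I / r) with hθdef
  have hθ : IsPrimitiveRoot θ r := Complex.isPrimitiveRoot_exp r (by omega)
  have hθ0 : θ ≠ 0 := Complex.exp_ne_zero _
  set w := θ ^ s with hwdef
  have hw : IsPrimitiveRoot w r := hθ.pow_of_coprime s hcop.symm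
  have hw0 : w ≠ 0 := pow_ne_zero _ hθ0
  set C : ℂ := ((r : ℂ) * z ^ (s - 1)) ^ (i - 1) with hCdef
  set d : Fin r → ℤ := fun k => ((i - 1 : ℕ) : ℤ) - ((k : ℕ) : ℤ) with hddef
  set B : Fin r → ℂ := fun k =>
    (-1 : ℂ) ^ (k : ℕ) * S k * z ^ (-(s : ℤ) * ((k : ℕ) : ℤ) - 1) * C * (-1 : ℂ) ^ (i - 1)
    with hBdef
  -- esymFin evaluation
  have hesym : ∀ m : Fin r,
      esymFin (Finset.univ \ {m})
        (fun m' : Fin r => (r : ℂ) * θ ^ ((m' : ℕ) * s) * z ^ (s - 1)) (i - 1)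
      = C * (-(w ^ (m : ℕ))) ^ (i - 1) := by
    intro m
    have hfun : (fun m' : Fin r => (r : ℂ) * θ ^ ((m' : ℕ) * s) * z ^ (s - 1))
        = fun m' : Fin r => ((r : ℂ) * z ^ (s - 1)) * w ^ (m' : ℕ) := by
      funext m'
      rw [hwdef, ← pow_mul, mul_comm s (m' : ℕ)]
      ring
    rw [hfun, esymFin_const_mul, esymFin_sdiff hw m (i - 1) (by omega), hCdef]
  -- per-term identity
  have hterm : ∀ m k : Fin r,
      θ ^ (-((((m : ℕ) * s * (k : ℕ)) : ℕ) : ℤ)) * (-(w ^ (m : ℕ))) ^ (i - 1)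
      = (-1 : ℂ) ^ (i - 1) * (w ^ d k) ^ (m : ℕ) := by
    intro m k
    have h1 : θ ^ (-((((m : ℕ) * s * (k : ℕ)) : ℕ) : ℤ)) = ((w ^ (m : ℕ)) ^ (k : ℕ))⁻¹ := by
      rw [zpow_neg, zpow_natCast]
      congr 1
      rw [show (m : ℕ) * s * (k : ℕ) = s * ((m : ℕ) * (k : ℕ)) by ring, pow_mul, ← hwdef,
        pow_mul]
    have h2 : (w ^ d k) ^ (m : ℕ)
        = (w ^ (m : ℕ)) ^ (i - 1) * ((w ^ (m : ℕ)) ^ (k : ℕ))⁻¹ := by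
      rw [← zpow_natCast (w ^ d k) (m : ℕ), ← zpow_mul, mul_comm (d k) ((m : ℕ) : ℤ),
        zpow_mul, zpow_natCast, hddef]
      simp only []
      rw [zpow_sub₀ (pow_ne_zero _ hw0), zpow_natCast, zpow_natCast, div_eq_mul_inv]
    rw [h1, h2, neg_pow]
    ring
  -- rewrite each m-summand
  have step1 : ∀ m : Fin r,
      (∑ k : Fin r, (-1 : ℂ) ^ (k : ℕ) * S k *
          θ ^ (-((((m : ℕ) * s * (k : ℕ)) : ℕ) : ℤ)) *
          z ^ (-(s : ℤ) * ((k : ℕ) : ℤ) - 1)) *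
        esymFin (Finset.univ \ {m})
          (fun m' : Fin r => (r : ℂ) * θ ^ ((m' : ℕ) * s) * z ^ (s - 1)) (i - 1)
      = ∑ k : Fin r, B k * (w ^ d k) ^ (m : ℕ) := by
    intro m
    rw [hesym m, Finset.sum_mul]
    refine sum_congr rfl fun k _ => ?_
    calc (-1 : ℂ) ^ (k : ℕ) * S k * θ ^ (-((((m : ℕ) * s * (k : ℕ)) : ℕ) : ℤ)) *
          z ^ (-(s : ℤ) * ((k : ℕ) : ℤ) - 1) * (C * (-(w ^ (m : ℕ))) ^ (i - 1))
        = ((-1 : ℂ) ^ (k : ℕ) * S k * z ^ (-(s : ℤ) * ((k : ℕ) : ℤ) - 1) * C) *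
          (θ ^ (-((((m : ℕ) * s * (k : ℕ)) : ℕ) : ℤ)) * (-(w ^ (m : ℕ))) ^ (i - 1)) := by
          ring
      _ = B k * (w ^ d k) ^ (m : ℕ) := by rw [hterm m k, hBdef]; ring
  rw [Finset.sum_congr rfl fun m _ => step1 m, Finset.sum_comm]
  -- geometric sums
  have hgeom : ∀ k : Fin r,
      (∑ m : Fin r, (w ^ d k) ^ (m : ℕ)) = if (k : ℕ) = i - 1 then (r : ℂ) else 0 := by
    intro k
    by_cases hk : (k : ℕ) = i - 1
    · rw [if_pos hk]
      have hd0 : d k = 0 := by rw [hddef]; simp only []; rw [hk]; ring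
      rw [hd0]
      simp
    · rw [if_neg hk]
      have hζr : (w ^ d k) ^ r = 1 := by
        rw [← zpow_natCast (w ^ d k) r, ← zpow_mul, mul_comm, zpow_mul, zpow_natCast,
          hw.pow_eq_one, one_zpow]
      have hζ1 : w ^ d k ≠ 1 := by
        intro h
        have hdvd : (r : ℤ) ∣ d k := (hw.zpow_eq_one_iff_dvd (d k)).mp h
        have hk' : (k : ℕ) < r := k.isLt
        have hi' : i - 1 < r := by omega
        have habs : |d k| < (r : ℤ) := by
          rw [hddef]
          simp only []
          rw [abs_lt]
          omega
        have hd0 : d k = 0 := Int.eq_zero_of_abs_lt_dvd hdvd habs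
        rw [hddef] at hd0
        simp only [] at hd0
        omega
      rw [Fin.sum_univ_eq_sum_range (fun m => (w ^ d k) ^ m) r, geom_sum_eq hζ1, hζr,
        sub_self, zero_div]
  have hcollapse : ∀ k : Fin r,
      (∑ m : Fin r, B k * (w ^ d k) ^ (m : ℕ))
      = B k * (if (k : ℕ) = i - 1 then (r : ℂ) else 0) := by
    intro k
    rw [← Finset.mul_sum, hgeom k]
  rw [Finset.sum_congr rfl fun k _ => hcollapse k]
  rw [Finset.sum_eq_single (⟨i - 1, by omega⟩ : Fin r)]
  · rw [if_pos rfl]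
    have hm1 : ((-1 : ℂ)) ^ (i - 1) * (-1 : ℂ) ^ (i - 1) = 1 := by
      rw [← pow_add]
      exact Even.neg_one_pow ⟨i - 1, rfl⟩
    have hC : C = (r : ℂ) ^ (i - 1) * z ^ ((s - 1) * (i - 1)) := by
      rw [hCdef, mul_pow, ← pow_mul]
    have hzc : z ^ ((s - 1) * (i - 1)) = z ^ ((((s - 1) * (i - 1) : ℕ)) : ℤ) :=
      (zpow_natCast z _).symm
    have hzz : z ^ (-(s : ℤ) * (((i - 1 : ℕ)) : ℤ) - 1) * z ^ ((((s - 1) * (i - 1) : ℕ)) : ℤ)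
        = z ^ (-(i : ℤ)) := by
      rw [← zpow_add₀ hz]
      congr 1
      have c2 : (((s - 1) * (i - 1) : ℕ) : ℤ) = ((s : ℤ) - 1) * ((i : ℤ) - 1) := by
        rw [Nat.cast_mul, Nat.cast_sub hs, Nat.cast_sub hi1]
        push_cast
        ring
      have c1 : ((i - 1 : ℕ) : ℤ) = (i : ℤ) - 1 := by omega
      rw [c1, c2]
      ring
    have hr' : (r : ℂ) ^ (i - 1) * (r : ℂ) = (r : ℂ) ^ i := by
      rw [← pow_succ]
      congr 1
      omega
    rw [hBdef]
    simp only [Fin.val_mk]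
    calc (-1 : ℂ) ^ (i - 1) * S ⟨i - 1, by omega⟩ *
          z ^ (-(s : ℤ) * (((i - 1 : ℕ)) : ℤ) - 1) * C * (-1 : ℂ) ^ (i - 1) * (r : ℂ)
        = ((-1 : ℂ) ^ (i - 1) * (-1 : ℂ) ^ (i - 1)) * S ⟨i - 1, by omega⟩ *
          ((r : ℂ) ^ (i - 1) * (r : ℂ)) *
          (z ^ (-(s : ℤ) * (((i - 1 : ℕ)) : ℤ) - 1) * z ^ ((((s - 1) * (i - 1) : ℕ)) : ℤ)) := by
          rw [hC, hzc]; ring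
      _ = S ⟨i - 1, by omega⟩ * (r : ℂ) ^ i * z ^ (-(i : ℤ)) := by
          rw [hm1, hr', hzz]; ring
  · intro b _ hb
    have hbv : (b : ℕ) ≠ i - 1 := by
      intro h
      exact hb (Fin.ext h)
    rw [if_neg hbv, mul_zero]
  · intro h
    exact absurd (mem_univ _) h
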